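/- arXiv:2006.10403 — 2 statements merged into one kernel-verified Lean document; each statement's English description precedes it below -/
import Mathlib

section
/- Let w be a word of odd length in a free group, cyclically reduced, which is a palindrome: w = e_r⋯e₁·f·e₁⋯e_r (reading the same forwards and backwards). Suppose a cyclic permutation w' of w is also a palindrome, with w' ≠ w. Then this is impossible: the only cyclic permutation of w that is a palindrome is w itself. Equivalently, two distinct cyclically reduced palindromic words cannot be cyclic conjugates of each other when their common length is odd (and they are primitive, i.e. the bi-infinite periodic word ⋯ww⋯ has minimal period equal to the length of w). -/
/-- A palindromic word of odd length which is primitive (its bi-infinite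
periodic extension has minimal period the length of the word) admits no other
palindromic cyclic permutation: if the rotation of `w` by `k < |w|` is again a
palindrome, then `k = 0`. -/
theorem palindrome_cyclic_perm_unique {α : Type*} (w : List α)
    (hodd : Odd w.length)
    (hpal : w.reverse = w)
    (hprim : ∀ j : ℕ, 0 < j → j < w.length → w.drop j ++ w.take j ≠ w)
    (k : ℕ) (hk : k < w.length)
    (hpal' : (w.drop k ++ w.take k).reverse = w.drop k ++ w.take k) :
    k = 0 := by
  set n := w.length with hn
  have hk' : w.rotate k = w.drop k ++ w.take k :=
    List.rotate_eq_drop_append_take hk.le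
  have hrev : (w.rotate k).reverse = w.rotate (n - k) := by
    rw [List.reverse_rotate, hpal, Nat.mod_eq_of_lt hk]
  have heq : w.rotate (n - k) = w.rotate k := by
    rw [← hrev, hk', hpal']
  have h2k : w.rotate (2 * k) = w := by
    have := congrArg (fun l => l.rotate k) heq
    simp only [List.rotate_rotate] at this
    have hnk : n - k + k = n := Nat.sub_add_cancel hk.le
    rw [hnk] at this
    rw [hn, List.rotate_length] at this
    rw [two_mul, ← this]
  have hmod : w.rotate (2 * k % n) = w := by
    rw [hn, List.rotate_mod, h2k]
  by_contra hk0
  have hkpos : 0 < k := Nat.pos_of_ne_zero hk0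
  have hnpos : 0 < n := lt_of_le_of_lt (Nat.zero_le k) hk
  by_cases hz : 2 * k % n = 0
  · have hdvd : n ∣ 2 * k := Nat.dvd_of_mod_eq_zero hz
    have hcop : Nat.Coprime n 2 := hodd.coprime_two_right
    have hdk : n ∣ k := (Nat.Coprime.dvd_of_dvd_mul_left hcop hdvd)
    have := Nat.le_of_dvd hkpos hdk
    omega
  · have hpos : 0 < 2 * k % n := Nat.pos_of_ne_zero hz
    have hlt : 2 * k % n < n := Nat.mod_lt _ hnpos
    have := hprim (2 * k % n) hpos hlt
    apply this
    rw [← List.rotate_eq_drop_append_take hlt.le, hmod]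
end

section
/- Let T be a locally finite tree with each edge assigned an orientation, and let T_F be a finite nonempty subtree such that from every directed edge e not in T_F there is a directed path (following the assigned orientations head-to-tail) from e ending at an edge of T_F, and such that every directed edge not in T_F points toward T_F (i.e., lies on such a descending path). Suppose additionally there is a second orientation (W-arrows) on the edges such that every edge is connected by a strictly W-descending path to a fixed base edge e₀ ∈ T_F. If for some edge e outside a sufficiently large finite ball B ⊇ T_F the two orientations disagree, then following W-arrows backward from e stays in the wake of e (the component of T∖{e} containing the tail of e together with e), forcing the base edge e₀ to lie outside B — a contradiction. Hence outside some finite set of edges, the two orientations agree. -/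
open SimpleGraph

/-- A descending walk starting along the directed edge `(u,v)` stays in the
component of `v` after deleting the edge `s(u,v)`. -/
lemma walk_stays {V : Type*} {G : SimpleGraph V} (D : V → V → Prop)
    (hor : ∀ u v : V, G.Adj u v → (D u v ↔ ¬ D v u))
    (hsupp : ∀ u v : V, D u v → G.Adj u v)
    {u v : V} (hD : D u v) {n : ℕ} {p : ℕ → V}
    (h0 : p 0 = u) (h1 : p 1 = v) (hstep : ∀ i ≤ n, D (p i) (p (i + 1))) :
    ∀ i, 1 ≤ i → i ≤ n + 1 → (G.deleteEdges {s(u, v)}).Reachable v (p i) := by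
  intro i
  induction i with
  | zero => omega
  | succ j ih =>
    intro _ hj
    rcases Nat.eq_or_lt_of_le (Nat.one_le_iff_ne_zero.mpr (by omega) : 1 ≤ j + 1) with h | h
    · have hjeq : j + 1 = 1 := h.symm
      rw [hjeq, h1]
    · have hjn : j ≤ n := by omega
      have hDj : D (p j) (p (j + 1)) := hstep j hjn
      have hadj : G.Adj (p j) (p (j + 1)) := hsupp _ _ hDj
      have ihj : (G.deleteEdges {s(u, v)}).Reachable v (p j) := ih (by omega) (by omega)
      by_cases hedge : s(p j, p (j + 1)) = s(u, v)
      · rcases Sym2.eq_iff.mp hedge with ⟨hju, hjv⟩ | ⟨hjv, hju⟩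
        · rw [hjv]
        · exfalso
          have : D v u := by rw [hjv, hju] at hDj; exact hDj
          exact ((hor u v (hsupp u v hD)).mp hD) this
      · exact ihj.trans (Adj.reachable (by
          rw [SimpleGraph.deleteEdges_adj]
          exact ⟨hadj, by simpa using hedge⟩))

/-- In a locally finite tree with two edge-orientations (`T`-arrows and
`W`-arrows), if there is a finite nonempty attracting subtree `T_F` for the
`T`-orientation (every directed edge outside `T_F` admits a descending path to
`T_F`), and every edge has a `W`-descending path to a fixed base edge
`e₀ = s(a,b) ∈ T_F`, then outside some finite set of edges the two
orientations agree. -/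
theorem orientations_agree_outside_finite_set {V : Type*} (G : SimpleGraph V)
    (hT : G.IsTree) (hlf : G.LocallyFinite)
    (Tdir Wdir : V → V → Prop)
    (hTor : ∀ u v : V, G.Adj u v → (Tdir u v ↔ ¬ Tdir v u))
    (hTsupp : ∀ u v : V, Tdir u v → G.Adj u v)
    (hWor : ∀ u v : V, G.Adj u v → (Wdir u v ↔ ¬ Wdir v u))
    (hWsupp : ∀ u v : V, Wdir u v → G.Adj u v)
    (TF : Set (Sym2 V)) (hTFsub : TF ⊆ G.edgeSet)
    (hTFfin : TF.Finite) (hTFne : TF.Nonempty)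
    (a b : V) (hab : G.Adj a b) (he₀ : s(a, b) ∈ TF)
    (hTdesc : ∀ u v : V, Tdir u v → s(u, v) ∉ TF →
      ∃ (n : ℕ) (p : ℕ → V), p 0 = u ∧ p 1 = v ∧
        (∀ i ≤ n, Tdir (p i) (p (i + 1))) ∧ s(p n, p (n + 1)) ∈ TF)
    (hWdesc : ∀ u v : V, Wdir u v →
      ∃ (n : ℕ) (p : ℕ → V), p 0 = u ∧ p 1 = v ∧
        (∀ i ≤ n, Wdir (p i) (p (i + 1))) ∧ s(p n, p (n + 1)) = s(a, b)) :
    ∃ S : Set (Sym2 V), S.Finite ∧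
      ∀ u v : V, G.Adj u v → s(u, v) ∉ S → (Tdir u v ↔ Wdir u v) := by
  classical
  -- a chosen walk from the first endpoint of each edge to `a`
  have hconn := hT.isConnected
  let Wk : ∀ f : Sym2 V, G.Walk f.out.1 a := fun f => (hconn f.out.1 a).some
  -- the exceptional set
  set S : Set (Sym2 V) := TF ∪ ⋃ f ∈ TF, {e | e ∈ (Wk f).edges} with hSdef
  have hSfin : S.Finite :=
    hTFfin.union (Set.Finite.biUnion hTFfin fun f _ => (Wk f).edges.finite_toSet)
  have hTFS : TF ⊆ S := Set.subset_union_left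
  -- the bridge property
  have bridge : ∀ u v : V, G.Adj u v →
      ¬ (G.deleteEdges {s(u, v)}).Reachable u v := by
    intro u v hadj
    have := (SimpleGraph.isAcyclic_iff_forall_adj_isBridge.mp hT.IsAcyclic) hadj
    exact SimpleGraph.isBridge_iff.mp this
  -- key lemma for W-descents
  have keyW : ∀ u v : V, s(u, v) ∉ S → Wdir u v →
      (G.deleteEdges {s(u, v)}).Reachable v a := by
    intro u v hS hW
    obtain ⟨n, p, h0, h1, hstep, hend⟩ := hWdesc u v hW
    have stays := walk_stays Wdir hWor hWsupp hW h0 h1 hstep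
    rcases Nat.eq_zero_or_pos n with rfl | hn
    · exfalso
      rw [h0, h1] at hend
      exact hS (hTFS (hend ▸ he₀))
    · rcases Sym2.eq_iff.mp hend with ⟨ha1, _⟩ | ⟨_, ha2⟩
      · rw [← ha1]; exact stays n hn (by omega)
      · rw [← ha2]; exact stays (n + 1) (by omega) le_rfl
  -- key lemma for T-descents
  have keyT : ∀ u v : V, s(u, v) ∉ S → Tdir u v →
      (G.deleteEdges {s(u, v)}).Reachable v a := by
    intro u v hS hT'
    have hnotTF : s(u, v) ∉ TF := fun h => hS (hTFS h)
    obtain ⟨n, p, h0, h1, hstep, hend⟩ := hTdesc u v hT' hnotTF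
    have stays := walk_stays Tdir hTor hTsupp hT' h0 h1 hstep
    rcases Nat.eq_zero_or_pos n with rfl | hn
    · exfalso
      rw [h0, h1] at hend
      exact hnotTF hend
    · set f := s(p n, p (n + 1)) with hfdef
      have hout : s(f.out.1, f.out.2) = f := by
        rw [Sym2.mk]
        exact f.out_eq
      have hreach_out : (G.deleteEdges {s(u, v)}).Reachable v f.out.1 := by
        rcases Sym2.eq_iff.mp (hout.trans hfdef.symm.symm) with ⟨h1', _⟩ | ⟨h1', _⟩
        · rw [h1']; exact stays n hn (by omega)
        · rw [h1']; exact stays (n + 1) (by omega) le_rfl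
      have havoid : ∀ e ∈ (Wk f).edges, e ∉ ({s(u, v)} : Set (Sym2 V)) := by
        intro e he
        simp only [Set.mem_singleton_iff]
        rintro rfl
        exact hS (Set.mem_union_right _ (Set.mem_biUnion hend he))
      exact hreach_out.trans ⟨(Wk f).toDeleteEdges _ havoid⟩
  refine ⟨S, hSfin, ?_⟩
  intro u v hadj hS
  have hS' : s(v, u) ∉ S := by rwa [Sym2.eq_swap]
  have hgraph : G.deleteEdges {s(v, u)} = G.deleteEdges {s(u, v)} := by
    rw [Sym2.eq_swap]
  constructor
  · intro hT'
    by_contra hW'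
    have hWvu : Wdir v u := by
      by_contra h
      exact hW' ((hWor u v hadj).mpr h)
    have r1 : (G.deleteEdges {s(u, v)}).Reachable v a := keyT u v hS hT'
    have r2 : (G.deleteEdges {s(u, v)}).Reachable u a := by
      have := keyW v u hS' hWvu
      rwa [hgraph] at this
    exact bridge u v hadj (r2.trans r1.symm)
  · intro hW'
    by_contra hT'
    have hTvu : Tdir v u := by
      by_contra h
      exact hT' ((hTor u v hadj).mpr h)
    have r1 : (G.deleteEdges {s(u, v)}).Reachable v a := keyW u v hS hW'
    have r2 : (G.deleteEdges {s(u, v)}).Reachable u a := by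
      have := keyT v u hS' hTvu
      rwa [hgraph] at this
    exact bridge u v hadj (r2.trans r1.symm)
end
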